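/- In an amenable group G, every absolute null set is small: if A ⊆ G satisfies μ(A) = 0 for every Banach measure μ on G, then A is small (that is, N ⊆ S). -/

import Mathlib

open scoped Pointwise Topology

/-- A subset `A` of a group `G` is *large* if `F * A = G` for some finite `F ⊆ G`. -/
def IsLarge {G : Type*} [Group G] (A : Set G) : Prop :=
  ∃ F : Finset G, (F : Set G) * A = Set.univ

/-- A subset `A` of a group `G` is *small* if `B \ A` is large for every large `B ⊆ G`. -/
def IsSmallSet {G : Type*} [Group G] (A : Set G) : Prop :=
  ∀ B : Set G, IsLarge B → IsLarge (B \ A)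

/-- A translation-invariant ideal on a group `G`: a proper family of subsets of `G`
containing the empty set, closed under subsets, finite unions and left translations. -/
structure IsInvariantIdeal (G : Type*) [Group G] (I : Set (Set G)) : Prop where
  proper : I ≠ Set.univ
  empty_mem : ∅ ∈ I
  subset_mem : ∀ ⦃A B : Set G⦄, A ∈ I → B ⊆ A → B ∈ I
  union_mem : ∀ ⦃A B : Set G⦄, A ∈ I → B ∈ I → A ∪ B ∈ I
  translate_mem : ∀ (x : G) ⦃A : Set G⦄, A ∈ I → (fun a => x * a) '' A ∈ I

/-- A subset `A ⊆ G` is `I`-large if `G \ FA ∈ I` for some finite `F ⊆ G`. -/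
def IsILarge {G : Type*} [Group G] (I : Set (Set G)) (A : Set G) : Prop :=
  ∃ F : Finset G, (Set.univ : Set G) \ ((F : Set G) * A) ∈ I

/-- A subset `A ⊆ G` is `I`-small if `L \ A` is `I`-large for every `I`-large `L ⊆ G`. -/
def IsISmall {G : Type*} [Group G] (I : Set (Set G)) (A : Set G) : Prop :=
  ∀ L : Set G, IsILarge I L → IsILarge I (L \ A)

/-- A *Banach measure* on a group `G`: a finitely additive, left-invariant probability
"measure" defined on all subsets of `G`, with values in `[0,1]`. -/
structure BanachMeasure (G : Type*) [Group G] where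
  toFun : Set G → ℝ
  nonneg : ∀ A : Set G, 0 ≤ toFun A
  le_one : ∀ A : Set G, toFun A ≤ 1
  additive : ∀ A B : Set G, Disjoint A B → toFun (A ∪ B) = toFun A + toFun B
  measure_univ : toFun Set.univ = 1
  invariant : ∀ (x : G) (A : Set G), toFun ((fun a => x * a) '' A) = toFun A

/-- The Følner condition: for every finite `F ⊆ G` and `ε > 0` there is a nonempty finite
`E ⊆ G` with `|E △ xE| < ε·|E|` for all `x ∈ F`.  A group is *amenable* iff it satisfies it. -/
def FolnerCond (G : Type*) [Group G] : Prop :=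
  ∀ (F : Finset G) (ε : ℝ), 0 < ε → ∃ E : Finset G, E.Nonempty ∧
    ∀ x ∈ F, ((symmDiff (E : Set G) ((fun a => x * a) '' (E : Set G))).ncard : ℝ) < ε * E.card

open Filter Set

section AuxLemmas

lemma ncard_inter_symmdiff_le {α : Type*} {X T S' : Set α} (hT : T.Finite) (hS : S'.Finite) :
    (X ∩ T).ncard ≤ (X ∩ S').ncard + (symmDiff T S').ncard := by
  have hsd : (symmDiff T S').Finite := by
    rw [Set.symmDiff_def]
    exact (hT.diff).union (hS.diff)
  have hsub : X ∩ T ⊆ (X ∩ S') ∪ (symmDiff T S') := by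
    rintro a ⟨haX, haT⟩
    by_cases h : a ∈ S'
    · exact Or.inl ⟨haX, h⟩
    · exact Or.inr (by rw [Set.symmDiff_def]; exact Or.inl ⟨haT, h⟩)
  calc (X ∩ T).ncard ≤ ((X ∩ S') ∪ symmDiff T S').ncard :=
        Set.ncard_le_ncard hsub ((hS.inter_of_right X).union hsd)
    _ ≤ (X ∩ S').ncard + (symmDiff T S').ncard := Set.ncard_union_le _ _

variable {G : Type*} [Group G]

lemma bm_mono (μ : BanachMeasure G) {X Y : Set G} (h : X ⊆ Y) :
    μ.toFun X ≤ μ.toFun Y := by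
  have h1 : X ∪ (Y \ X) = Y := Set.union_diff_cancel h
  have h2 := μ.additive X (Y \ X) disjoint_sdiff_self_right
  rw [h1] at h2
  have := μ.nonneg (Y \ X)
  linarith

lemma bm_subadd (μ : BanachMeasure G) (X Y : Set G) :
    μ.toFun (X ∪ Y) ≤ μ.toFun X + μ.toFun Y := by
  have h1 : X ∪ (Y \ X) = X ∪ Y := Set.union_diff_self
  have h2 := μ.additive X (Y \ X) disjoint_sdiff_self_right
  rw [h1] at h2
  have := bm_mono μ (Set.diff_subset : Y \ X ⊆ Y)
  linarith

lemma bm_empty (μ : BanachMeasure G) : μ.toFun ∅ = 0 := by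
  have := μ.additive ∅ ∅ (by simp)
  simp at this; linarith

lemma bm_biUnion (μ : BanachMeasure G) (F : Finset G) (f : G → Set G) :
    μ.toFun (⋃ a ∈ F, f a) ≤ ∑ a ∈ F, μ.toFun (f a) := by
  classical
  induction F using Finset.induction_on with
  | empty => simp [bm_empty μ]
  | @insert a s hx ih =>
      rw [Finset.set_biUnion_insert, Finset.sum_insert hx]
      calc μ.toFun (f a ∪ ⋃ x ∈ s, f x) ≤ μ.toFun (f a) + μ.toFun (⋃ x ∈ s, f x) :=
            bm_subadd μ _ _
        _ ≤ _ := by linarith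

lemma bm_large (μ : BanachMeasure G) {B : Set G} (hB : IsLarge B) :
    0 < μ.toFun B := by
  obtain ⟨F, hF⟩ := hB
  have hun : (F : Set G) * B = ⋃ a ∈ F, (fun b => a * b) '' B := by
    ext y
    simp only [Set.mem_mul, Set.mem_iUnion, Set.mem_image, Finset.mem_coe, exists_prop]
  by_contra h
  push_neg at h
  have h1 : μ.toFun ((F : Set G) * B) ≤ ∑ a ∈ F, μ.toFun ((fun b => a * b) '' B) := by
    rw [hun]; exact bm_biUnion μ F _
  have h2 : ∑ a ∈ F, μ.toFun ((fun b => a * b) '' B) = F.card * μ.toFun B := by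
    rw [Finset.sum_congr rfl fun a _ => μ.invariant a B]
    simp [mul_comm]
  rw [hF, μ.measure_univ, h2] at h1
  have : (F.card : ℝ) * μ.toFun B ≤ 0 :=
    mul_nonpos_of_nonneg_of_nonpos (Nat.cast_nonneg _) h
  linarith

end AuxLemmas

/-- In an amenable group every absolute null set is small: if `μ(A) = 0` for every Banach
measure `μ` on `G`, then `A` is small. -/
theorem absolute_null_is_small {G : Type*} [Group G] (hG : FolnerCond G) (A : Set G)
    (hA : ∀ μ : BanachMeasure G, μ.toFun A = 0) : IsSmallSet A := by
  classical
  intro B hB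
  by_contra hC
  set C : Set G := B \ A with hCdef
  -- the complement of C is (right-)thick
  have hthick : ∀ K : Finset G, ∃ y : G, ∀ k ∈ K, k * y ∉ C := by
    intro K
    have h1 : (↑(K.image (·⁻¹)) : Set G) * C ≠ Set.univ := fun h => hC ⟨K.image (·⁻¹), h⟩
    have h2 : ∃ y, y ∉ (↑(K.image (·⁻¹)) : Set G) * C := by
      by_contra h; push_neg at h
      exact h1 (Set.eq_univ_of_forall h)
    obtain ⟨y, hy⟩ := h2
    refine ⟨y, fun k hk hky => hy ?_⟩
    exact Set.mem_mul.mpr ⟨k⁻¹, by simp [hk], k * y, hky, inv_mul_cancel_left k y⟩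
  -- Følner sets indexed by (F, n)
  have hEx : ∀ i : Finset G × ℕ, ∃ E : Finset G, E.Nonempty ∧ ∀ x ∈ i.1,
      ((symmDiff (E : Set G) ((fun a => x * a) '' (E : Set G))).ncard : ℝ)
        < (1 / (i.2 + 1)) * E.card :=
    fun i => hG i.1 (1 / (i.2 + 1)) (by positivity)
  choose E hEne hEfol using hEx
  choose g hg using fun i : Finset G × ℕ => hthick (E i)
  set S : Finset G × ℕ → Finset G := fun i => (E i).image (· * g i) with hSdef
  have hScard : ∀ i, ((S i).card : ℝ) = (E i).card := fun i => by
    simp only [hSdef]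
    rw [Finset.card_image_of_injective _ (mul_left_injective (g i))]
  have hEpos : ∀ i, (0 : ℝ) < (E i).card := fun i => by exact_mod_cast (hEne i).card_pos
  have hSpos : ∀ i, (0 : ℝ) < (S i).card := fun i => by rw [hScard]; exact hEpos i
  -- the averaging functionals
  set ν : Set G → Finset G × ℕ → ℝ :=
    fun X i => ((X ∩ ↑(S i)).ncard : ℝ) / (S i).card with hν
  have hν0 : ∀ (X : Set G) i, 0 ≤ ν X i :=
    fun X i => div_nonneg (Nat.cast_nonneg _) (Nat.cast_nonneg _)
  have hν1 : ∀ (X : Set G) i, ν X i ≤ 1 := by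
    intro X i
    have hle : (X ∩ ↑(S i)).ncard ≤ (S i).card := by
      rw [← Set.ncard_coe_finset (S i)]
      exact Set.ncard_le_ncard Set.inter_subset_right (S i).finite_toSet
    simp only [hν]
    rw [div_le_one (hSpos i)]
    exact_mod_cast hle
  -- ultrafilter limit
  set u : Ultrafilter (Finset G × ℕ) := Ultrafilter.of atTop with hu
  have hule : (↑u : Filter (Finset G × ℕ)) ≤ atTop := Ultrafilter.of_le _
  have hlim : ∀ X : Set G, ∃ a ∈ Set.Icc (0 : ℝ) 1, Tendsto (ν X) ↑u (𝓝 a) := by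
    intro X
    have hprin : ↑(u.map (ν X)) ≤ 𝓟 (Set.Icc (0 : ℝ) 1) := by
      rw [le_principal_iff]
      exact Ultrafilter.mem_map.mpr
        (Filter.mem_of_superset Filter.univ_mem fun i _ => ⟨hν0 X i, hν1 X i⟩)
    obtain ⟨a, ha, hle⟩ := isCompact_Icc.ultrafilter_le_nhds (u.map (ν X)) hprin
    exact ⟨a, ha, by rwa [Ultrafilter.coe_map] at hle⟩
  choose L hL01 hLtend using hlim
  -- finite additivity of the limit functional
  have hadd : ∀ X Y : Set G, Disjoint X Y → L (X ∪ Y) = L X + L Y := by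
    intro X Y hXY
    have hpt : ν (X ∪ Y) = fun i => ν X i + ν Y i := by
      funext i
      have hfX : (X ∩ ↑(S i)).Finite := (S i).finite_toSet.inter_of_right X
      have hfY : (Y ∩ ↑(S i)).Finite := (S i).finite_toSet.inter_of_right Y
      have hd : Disjoint (X ∩ ↑(S i)) (Y ∩ ↑(S i)) :=
        hXY.mono Set.inter_subset_left Set.inter_subset_left
      have heq : (X ∪ Y) ∩ ↑(S i) = (X ∩ ↑(S i)) ∪ (Y ∩ ↑(S i)) :=
        Set.union_inter_distrib_right X Y _
      simp only [hν]
      rw [heq, Set.ncard_union_eq hd hfX hfY]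
      push_cast
      ring
    have h2 : Tendsto (ν (X ∪ Y)) ↑u (𝓝 (L X + L Y)) := by
      rw [hpt]; exact (hLtend X).add (hLtend Y)
    exact tendsto_nhds_unique (hLtend (X ∪ Y)) h2
  -- total mass one
  have hνuniv : ∀ i, ν Set.univ i = 1 := by
    intro i
    simp only [hν, Set.univ_inter, Set.ncard_coe_finset]
    exact div_self (hSpos i).ne'
  have huniv : L Set.univ = 1 :=
    tendsto_nhds_unique (hLtend Set.univ)
      (by rw [show ν Set.univ = fun _ => (1 : ℝ) from funext hνuniv]; exact tendsto_const_nhds)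
  -- left invariance of the limit functional
  have hinv : ∀ (x : G) (X : Set G), L ((fun a => x * a) '' X) = L X := by
    intro x X
    set b : Finset G × ℕ → ℝ := fun i =>
      ((symmDiff (↑(E i) : Set G) ((fun a => x * a) '' (↑(E i) : Set G))).ncard : ℝ)
        / (E i).card with hb
    have hinj : Function.Injective (fun a : G => x * a) := mul_right_injective x
    have hkey : ∀ i, |ν ((fun a => x * a) '' X) i - ν X i| ≤ b i := by
      intro i
      set T : Set G := (fun a => x⁻¹ * a) '' ↑(S i) with hT
      have hTfin : T.Finite := (S i).finite_toSet.image _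
      have hSfin : (↑(S i) : Set G).Finite := (S i).finite_toSet
      have hxT : (fun a => x * a) '' T = ↑(S i) := by
        simp only [hT, ← Set.image_comp]
        simp [Function.comp]
      have ha : (((fun a => x * a) '' X) ∩ ↑(S i)).ncard = (X ∩ T).ncard := by
        have himg : (fun a => x * a) '' (X ∩ T) = ((fun a => x * a) '' X) ∩ ↑(S i) := by
          rw [Set.image_inter hinj, hxT]
        rw [← himg, Set.ncard_image_of_injective _ hinj]
      have hc : (symmDiff T ↑(S i)).ncard
          = (symmDiff (↑(E i) : Set G) ((fun a => x * a) '' (↑(E i) : Set G))).ncard := by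
        have h2 : (fun a => x * a) '' (symmDiff T ↑(S i))
            = symmDiff (↑(S i) : Set G) ((fun a => x * a) '' ↑(S i)) := by
          rw [Set.image_symmDiff hinj, hxT]
        have e1 : (fun a => a * g i) '' (↑(E i) : Set G) = ↑(S i) := by
          simp only [hSdef]
          simp [Finset.coe_image]
        have e2 : (fun a => a * g i) '' ((fun a => x * a) '' (↑(E i) : Set G))
            = (fun a => x * a) '' (↑(S i) : Set G) := by
          rw [← e1, ← Set.image_comp, ← Set.image_comp]
          apply congrArg (· '' _)
          funext a
          simp [Function.comp, mul_assoc]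
        have h3 : (fun a => a * g i) ''
              (symmDiff (↑(E i) : Set G) ((fun a => x * a) '' (↑(E i) : Set G)))
            = symmDiff (↑(S i) : Set G) ((fun a => x * a) '' ↑(S i)) := by
          rw [Set.image_symmDiff (mul_left_injective (g i)), e1, e2]
        calc (symmDiff T ↑(S i)).ncard
            = ((fun a => x * a) '' (symmDiff T ↑(S i))).ncard :=
              (Set.ncard_image_of_injective _ hinj).symm
          _ = ((fun a => a * g i) ''
                (symmDiff (↑(E i) : Set G) ((fun a => x * a) '' (↑(E i) : Set G)))).ncard := by
              rw [h2, h3]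
          _ = _ := Set.ncard_image_of_injective _ (mul_left_injective (g i))
      have hb1 : ((X ∩ T).ncard : ℝ)
          ≤ (X ∩ ↑(S i)).ncard + (symmDiff T ↑(S i)).ncard := by
        exact_mod_cast ncard_inter_symmdiff_le hTfin hSfin
      have hb2 : ((X ∩ ↑(S i)).ncard : ℝ)
          ≤ (X ∩ T).ncard + (symmDiff T ↑(S i)).ncard := by
        have h := ncard_inter_symmdiff_le hSfin hTfin (X := X)
        rw [symmDiff_comm] at h
        exact_mod_cast h
      have habs : |((X ∩ T).ncard : ℝ) - ((X ∩ ↑(S i)).ncard : ℝ)|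
          ≤ ((symmDiff T ↑(S i)).ncard : ℝ) := by
        rw [abs_sub_le_iff]
        constructor <;> linarith
      have hrepr : ν ((fun a => x * a) '' X) i - ν X i
          = (((X ∩ T).ncard : ℝ) - ((X ∩ ↑(S i)).ncard : ℝ)) / (S i).card := by
        simp only [hν]
        rw [ha]
        ring
      rw [hrepr]
      simp only [hb]
      rw [abs_div, Nat.abs_cast, hScard i]
      rw [div_le_div_iff_of_pos_right (hEpos i)]
      calc |((X ∩ T).ncard : ℝ) - ((X ∩ ↑(S i)).ncard : ℝ)|
          ≤ ((symmDiff T ↑(S i)).ncard : ℝ) := habs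
        _ = _ := by exact_mod_cast hc
    have hb0 : Tendsto b atTop (𝓝 0) := by
      rw [Metric.tendsto_atTop]
      intro ε hε
      obtain ⟨n, hn⟩ := exists_nat_one_div_lt hε
      refine ⟨({x}, n), fun i hi => ?_⟩
      have hxi : x ∈ i.1 := hi.1 (Finset.mem_singleton_self x)
      have hfol := hEfol i x hxi
      have hmono : (1 : ℝ) / (i.2 + 1) ≤ 1 / (n + 1) := by
        apply one_div_le_one_div_of_le (by positivity)
        have : (n : ℝ) ≤ i.2 := by exact_mod_cast hi.2
        linarith
      have hbi : b i < ε := by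
        simp only [hb]
        rw [div_lt_iff₀ (hEpos i)]
        calc ((symmDiff (↑(E i) : Set G) ((fun a => x * a) '' (↑(E i) : Set G))).ncard : ℝ)
            < (1 / (i.2 + 1)) * (E i).card := hfol
          _ ≤ (1 / (n + 1)) * (E i).card :=
              mul_le_mul_of_nonneg_right hmono (Nat.cast_nonneg _)
          _ < ε * (E i).card := mul_lt_mul_of_pos_right hn (hEpos i)
      have hbnn : 0 ≤ b i := by
        simp only [hb]; positivity
      rw [Real.dist_eq, sub_zero, abs_of_nonneg hbnn]
      exact hbi
    have hdiff : Tendsto (fun i => ν ((fun a => x * a) '' X) i - ν X i) ↑u (𝓝 0) :=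
      squeeze_zero_norm (fun i => by simpa [Real.norm_eq_abs] using hkey i)
        (hb0.mono_left hule)
    have h4 := (hLtend ((fun a => x * a) '' X)).sub (hLtend X)
    have h5 := tendsto_nhds_unique h4 hdiff
    have := sub_eq_zero.mp h5
    exact this
  -- assemble the Banach measure
  set μ : BanachMeasure G :=
    ⟨L, fun X => (hL01 X).1, fun X => (hL01 X).2, hadd, huniv, hinv⟩ with hμ
  have hto : μ.toFun = L := rfl
  have hA0 : L A = 0 := by rw [← hto]; exact hA μ
  have hBpos : 0 < L B := by rw [← hto]; exact bm_large μ hB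
  -- the measure of C is zero
  have hSsub : ∀ i, (↑(S i) : Set G) ⊆ Cᶜ := by
    intro i a haa
    simp only [hSdef, Finset.coe_image, Set.mem_image] at haa
    obtain ⟨e, he, rfl⟩ := haa
    exact hg i e (by exact_mod_cast he)
  have hνD : ∀ i, ν Cᶜ i = 1 := by
    intro i
    simp only [hν]
    rw [Set.inter_eq_self_of_subset_right (hSsub i), Set.ncard_coe_finset]
    exact div_self (hSpos i).ne'
  have hD1 : L Cᶜ = 1 :=
    tendsto_nhds_unique (hLtend Cᶜ)
      (by rw [show ν Cᶜ = fun _ => (1 : ℝ) from funext hνD]; exact tendsto_const_nhds)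
  have hC0 : L C = 0 := by
    have h := hadd C Cᶜ disjoint_compl_right
    rw [Set.union_compl_self, huniv] at h
    linarith
  -- but C must have positive measure since B is large and μ A = 0
  have hsub : B ⊆ C ∪ A := by
    intro bb hbb
    by_cases h : bb ∈ A
    · exact Or.inr h
    · exact Or.inl (by rw [hCdef]; exact ⟨hbb, h⟩)
  have hle : L B ≤ L C + L A := by
    rw [← hto]
    exact le_trans (bm_mono μ hsub) (bm_subadd μ C A)
  linarith
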